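/- Let H = Gp⟨x, y, z, t | tx = xt, xz = zx, zy = yz, y²x = xy⟩ and let X = {t, x, z, xy} be the indicated subset of H. Then (i) the submonoid of H generated by X is isomorphic to the trace monoid T(P_4), via an isomorphism sending t, x, z, xy (in this order) to the generators u₁, u₂, u₃, u₄ of T(P_4); and (ii) the subgroup of H generated by X is not isomorphic to the right-angled Artin group A(P_4). -/

import Mathlib

/-- The defining relations of the trace monoid `T(P_4)` of the path with four vertices:
consecutive generators commute. -/
def tracePathRel : FreeMonoid (Fin 4) → FreeMonoid (Fin 4) → Prop := fun p q =>
  ∃ i : Fin 3, p = FreeMonoid.of i.castSucc * FreeMonoid.of i.succ ∧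
    q = FreeMonoid.of i.succ * FreeMonoid.of i.castSucc

/-- The trace monoid `T(P_4)`. -/
abbrev TP4 := PresentedMonoid tracePathRel

/-- Relators of the right-angled Artin group `A(P_4)`: consecutive generators commute. -/
def ap4Rels : Set (FreeGroup (Fin 4)) :=
  {r | ∃ i : Fin 3,
    r = FreeGroup.of i.castSucc * FreeGroup.of i.succ *
        (FreeGroup.of i.succ * FreeGroup.of i.castSucc)⁻¹}

/-- The right-angled Artin group `A(P_4)`. -/
abbrev AP4 := PresentedGroup ap4Rels

/-- Relators of `H = Gp⟨x, y, z, t | tx = xt, xz = zx, zy = yz, y²x = xy⟩` where the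
generators `0, 1, 2, 3` play the roles of `x, y, z, t` respectively. -/
def hRels : Set (FreeGroup (Fin 4)) :=
  { FreeGroup.of 3 * FreeGroup.of 0 * (FreeGroup.of 0 * FreeGroup.of 3)⁻¹,
    FreeGroup.of 0 * FreeGroup.of 2 * (FreeGroup.of 2 * FreeGroup.of 0)⁻¹,
    FreeGroup.of 2 * FreeGroup.of 1 * (FreeGroup.of 1 * FreeGroup.of 2)⁻¹,
    (FreeGroup.of 1) ^ 2 * FreeGroup.of 0 * (FreeGroup.of 0 * FreeGroup.of 1)⁻¹ }

/-- The group `H = Gp⟨x, y, z, t | tx = xt, xz = zx, zy = yz, y²x = xy⟩`. -/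
abbrev Hgrp := PresentedGroup hRels

/-- The generator `x` of `H`. -/
def Hgrp.x : Hgrp := PresentedGroup.of 0
/-- The generator `y` of `H`. -/
def Hgrp.y : Hgrp := PresentedGroup.of 1
/-- The generator `z` of `H`. -/
def Hgrp.z : Hgrp := PresentedGroup.of 2
/-- The generator `t` of `H`. -/
def Hgrp.t : Hgrp := PresentedGroup.of 3

namespace TP4P
open AddMonoidAlgebra (single single_mul_single)

noncomputable section

abbrev R := AddMonoidAlgebra ℚ ℤ

instance : CoeFun R (fun _ => ℤ → ℚ) := ⟨fun f => (f.coeff : ℤ → ℚ)⟩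

lemma R_add_apply (f g : R) (n : ℤ) : (f + g) n = f n + g n := rfl
lemma R_zero_apply (n : ℤ) : (0 : R) n = 0 := rfl
lemma R_single_apply (a n : ℤ) (b : ℚ) : (single a b : R) n = if a = n then b else 0 :=
  Finsupp.single_apply
lemma R_single_mul_apply (f : R) (a : ℤ) (b : ℚ) (n : ℤ) :
    (single a b * f) n = b * f (-a + n) :=
  AddMonoidAlgebra.coeff_single_mul_apply f b a n
lemma R_single_eq_single_iff (a a' : ℤ) (b b' : ℚ) :
    (single a b : R) = single a' b' ↔ (a = a' ∧ b = b') ∨ (b = 0 ∧ b' = 0) :=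
  AddMonoidAlgebra.single_inj

/-- affine monoid: `⟨m, c⟩` represents `a ↦ m * a + c`. -/
@[ext] structure Aff where
  m : R
  c : R

instance : Mul Aff := ⟨fun a b => ⟨a.m * b.m, a.m * b.c + a.c⟩⟩
instance : One Aff := ⟨⟨1, 0⟩⟩

@[simp] lemma Aff.mul_m (a b : Aff) : (a * b).m = a.m * b.m := rfl
@[simp] lemma Aff.mul_c (a b : Aff) : (a * b).c = a.m * b.c + a.c := rfl
@[simp] lemma Aff.one_m : (1 : Aff).m = 1 := rfl
@[simp] lemma Aff.one_c : (1 : Aff).c = 0 := rfl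

instance : Monoid Aff where
  mul_assoc a b c := by refine Aff.ext ?_ ?_ <;> simp <;> ring
  one_mul a := by refine Aff.ext ?_ ?_ <;> simp
  mul_one a := by refine Aff.ext ?_ ?_ <;> simp

/-- units from explicit inverse data of the multiplier -/
def affUnit (m m' : R) (c : R) (h : m * m' = 1) : Affˣ where
  val := ⟨m, c⟩
  inv := ⟨m', -(m' * c)⟩
  val_inv := by refine Aff.ext ?_ ?_ <;> simp [h, ← mul_assoc]
  inv_val := by refine Aff.ext ?_ ?_ <;> simp [mul_comm m' m, h]

@[simp] lemma affUnit_val (m m' c h) : ((affUnit m m' c h : Affˣ) : Aff) = ⟨m, c⟩ := rfl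

def σ : R := single 1 1
def e2 : R := single 0 2

lemma σ_inv : σ * single (-1) 1 = 1 := by
  rw [σ, single_mul_single]; norm_num [AddMonoidAlgebra.one_def]

lemma e2_inv : e2 * single 0 (1/2) = 1 := by
  rw [e2, single_mul_single]; norm_num [AddMonoidAlgebra.one_def]

lemma one_R : (1 : R) = single 0 1 := AddMonoidAlgebra.one_def

/-- pattern A (the `t`-image) -/
def pA : Affˣ := affUnit σ (single (-1) 1) 0 σ_inv
/-- pattern B (the `x`-image) -/
def pB : Affˣ := affUnit e2 (single 0 (1/2)) 0 e2_inv
/-- pattern U (the `xy`-image) -/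
def pU : Affˣ := affUnit e2 (single 0 (1/2)) e2 e2_inv
/-- the `y`-image -/
def pY : Affˣ := affUnit 1 1 1 (one_mul 1)

@[simp] lemma pA_val : ((pA : Affˣ) : Aff) = ⟨σ, 0⟩ := rfl
@[simp] lemma pB_val : ((pB : Affˣ) : Aff) = ⟨e2, 0⟩ := rfl
@[simp] lemma pU_val : ((pU : Affˣ) : Aff) = ⟨e2, e2⟩ := rfl
@[simp] lemma pY_val : ((pY : Affˣ) : Aff) = ⟨1, 1⟩ := rfl

lemma pB_mul_pY : pB * pY = pU := by
  refine Units.ext ?_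
  show ((pB : Aff) * (pY : Aff)) = (pU : Aff)
  refine Aff.ext ?_ ?_ <;> simp


/-! ### products over words and invariants -/

def Φ (g : Fin 4 → Aff) (l : List (Fin 4)) : Aff := (l.map g).prod

@[simp] lemma Φ_nil (g) : Φ g [] = 1 := rfl
@[simp] lemma Φ_cons (g) (i : Fin 4) (l) : Φ g (i :: l) = g i * Φ g l := by
  simp [Φ]
@[simp] lemma Φ_append (g) (l l' : List (Fin 4)) : Φ g (l ++ l') = Φ g l * Φ g l' := by
  simp [Φ]

structure PatOK (g : Fin 4 → Aff) (κ : Fin 4 → Fin 4) : Prop where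
  hA : ∀ i, κ i = 0 → g i = ⟨σ, 0⟩
  hB : ∀ i, κ i = 1 → g i = ⟨e2, 0⟩
  hU : ∀ i, κ i = 2 → g i = ⟨e2, e2⟩
  hI : ∀ i, κ i = 3 → g i = 1
  inj : ∀ i j, κ i ≠ 3 → κ i = κ j → i = j

lemma fin4_cases (a : Fin 4) : a = 0 ∨ a = 1 ∨ a = 2 ∨ a = 3 := by fin_cases a <;> simp

structure Inv (a : Aff) : Prop where
  mm : ∃ p q : ℕ, a.m = single (q : ℤ) ((2:ℚ)^p)
  cc : ∀ n : ℤ, ∃ k : ℕ, a.c n = 2 * k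
  neg : ∀ n : ℤ, n < 0 → a.c n = 0

lemma inv_one : Inv 1 := by
  refine ⟨⟨0, 0, by rw [pow_zero, Nat.cast_zero, ← one_R]; rfl⟩,
    fun n => ⟨0, by rw [Aff.one_c, R_zero_apply, Nat.cast_zero, mul_zero]⟩,
    fun n _ => by rw [Aff.one_c, R_zero_apply]⟩

lemma σ_mul_apply (f : R) (n : ℤ) : (σ * f) n = f (n - 1) := by
  rw [σ, R_single_mul_apply, one_mul]; ring_nf
lemma e2_mul_apply (f : R) (n : ℤ) : (e2 * f) n = 2 * f n := by
  rw [e2, R_single_mul_apply, neg_zero, zero_add]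

lemma e2_apply_zero : e2 0 = 2 := by
  rw [e2, R_single_apply]; simp
lemma e2_apply_ne (n : ℤ) (h : n ≠ 0) : e2 n = 0 := by
  rw [e2, R_single_apply, if_neg (by omega)]

lemma σ_mul_m (p q : ℕ) : σ * single ((q:ℤ)) ((2:ℚ)^p) = single ((q+1 : ℕ) : ℤ) ((2:ℚ)^p) := by
  rw [σ, single_mul_single, one_mul]
  congr 1
  push_cast; ring

lemma e2_mul_m (p q : ℕ) : e2 * single ((q:ℤ)) ((2:ℚ)^p) = single ((q:ℤ)) ((2:ℚ)^(p+1)) := by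
  rw [e2, single_mul_single, zero_add]
  congr 1
  ring

lemma inv_mul_pat {g κ} (P : PatOK g κ) (i : Fin 4) {x : Aff} (hx : Inv x) :
    Inv (g i * x) := by
  obtain ⟨p, q, hm⟩ := hx.mm
  rcases fin4_cases (κ i) with h | h | h | h
  · rw [P.hA i h]
    refine ⟨⟨p, q+1, ?_⟩, fun n => ?_, fun n hn => ?_⟩
    · rw [Aff.mul_m, hm]; exact σ_mul_m p q
    · obtain ⟨k, hk⟩ := hx.cc (n-1)
      refine ⟨k, ?_⟩
      rw [Aff.mul_c, R_add_apply, σ_mul_apply, hk, R_zero_apply, add_zero]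
    · rw [Aff.mul_c, R_add_apply, σ_mul_apply, hx.neg (n-1) (by omega),
        R_zero_apply, add_zero]
  · rw [P.hB i h]
    refine ⟨⟨p+1, q, ?_⟩, fun n => ?_, fun n hn => ?_⟩
    · rw [Aff.mul_m, hm]; exact e2_mul_m p q
    · obtain ⟨k, hk⟩ := hx.cc n
      refine ⟨2*k, ?_⟩
      rw [Aff.mul_c, R_add_apply, e2_mul_apply, hk, R_zero_apply, add_zero]
      push_cast; ring
    · rw [Aff.mul_c, R_add_apply, e2_mul_apply, hx.neg n hn, R_zero_apply]
      ring
  · rw [P.hU i h]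
    refine ⟨⟨p+1, q, ?_⟩, fun n => ?_, fun n hn => ?_⟩
    · rw [Aff.mul_m, hm]; exact e2_mul_m p q
    · obtain ⟨k, hk⟩ := hx.cc n
      by_cases h0 : n = 0
      · subst h0
        refine ⟨2*k+1, ?_⟩
        rw [Aff.mul_c, R_add_apply, e2_mul_apply, hk, e2_apply_zero]
        push_cast; ring
      · refine ⟨2*k, ?_⟩
        rw [Aff.mul_c, R_add_apply, e2_mul_apply, hk, e2_apply_ne n h0]
        push_cast; ring
    · rw [Aff.mul_c, R_add_apply, e2_mul_apply, hx.neg n hn,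
        e2_apply_ne n (by omega)]
      ring
  · rw [P.hI i h, one_mul]; exact hx

lemma inv_Φ {g κ} (P : PatOK g κ) (l : List (Fin 4)) : Inv (Φ g l) := by
  induction l with
  | nil => simpa using inv_one
  | cons i r ih => rw [Φ_cons]; exact inv_mul_pat P i ih

/-- if the prefix before a `U`-letter contains no `A`-letter, the 0-coefficient is nonzero -/
lemma c0_ne_zero {g κ} (P : PatOK g κ) :
    ∀ (p : List (Fin 4)) (a : Fin 4) (s : List (Fin 4)), κ a = 2 →
      (∀ b ∈ p, κ b ≠ 0) → (Φ g (p ++ a :: s)).c 0 ≠ 0 := by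
  intro p
  induction p with
  | nil =>
    intro a s ha _
    obtain ⟨k, hk⟩ := (inv_Φ P s).cc 0
    rw [List.nil_append, Φ_cons, P.hU a ha, Aff.mul_c, R_add_apply,
      e2_mul_apply, hk, e2_apply_zero]
    positivity
  | cons i p' ih =>
    intro a s ha hp
    have hi := hp i (by simp)
    have hrest := ih a s ha (fun b hb => hp b (by simp [hb]))
    rcases fin4_cases (κ i) with h | h | h | h
    · exact absurd h hi
    · rw [List.cons_append, Φ_cons, P.hB i h, Aff.mul_c, R_add_apply,
        e2_mul_apply, R_zero_apply, add_zero]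
      intro hcon
      exact hrest (by linarith)
    · obtain ⟨k, hk⟩ := (inv_Φ P (p' ++ a :: s)).cc 0
      rw [List.cons_append, Φ_cons, P.hU i h, Aff.mul_c, R_add_apply,
        e2_mul_apply, hk, e2_apply_zero]
      positivity
    · rw [List.cons_append, Φ_cons, P.hI i h, one_mul]
      exact hrest

/-- products of words with only `B`/`I` letters -/
lemma prod_BI {g κ} (P : PatOK g κ) :
    ∀ (w : List (Fin 4)), (∀ b ∈ w, κ b = 1 ∨ κ b = 3) →
      ∃ j : ℕ, Φ g w = ⟨single 0 ((2:ℚ)^j), 0⟩ := by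
  intro w
  induction w with
  | nil =>
    refine fun _ => ⟨0, ?_⟩
    rw [Φ_nil]
    refine Aff.ext ?_ ?_
    · rw [Aff.one_m, pow_zero, ← one_R]
    · rw [Aff.one_c]
  | cons i w' ih =>
    intro hw
    obtain ⟨j, hj⟩ := ih (fun b hb => hw b (by simp [hb]))
    rcases hw i (by simp) with h | h
    · refine ⟨j+1, ?_⟩
      rw [Φ_cons, P.hB i h, hj]
      refine Aff.ext ?_ ?_
      · rw [Aff.mul_m]
        show e2 * single 0 ((2:ℚ)^j) = _
        rw [e2, single_mul_single, zero_add]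
        congr 1
        ring
      · show e2 * (0:R) + 0 = 0
        rw [mul_zero, add_zero]
    · refine ⟨j, ?_⟩
      rw [Φ_cons, P.hI i h, hj, one_mul]

lemma mul_cancel_single {a : ℤ} {b : ℚ} (hb : b ≠ 0) {f f' : R}
    (h : single a b * f = single a b * f') : f = f' := by
  have key : ∀ u : R, single (-a) b⁻¹ * (single a b * u) = u := by
    intro u
    rw [← mul_assoc, single_mul_single, neg_add_cancel, inv_mul_cancel₀ hb, ← one_R, one_mul]
  rw [← key f, ← key f', h]

lemma aff_cancel {a : ℤ} {b : ℚ} {c : R} (hb : b ≠ 0) {x y : Aff}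
    (h : (⟨single a b, c⟩ : Aff) * x = ⟨single a b, c⟩ * y) : x = y := by
  have hm : single a b * x.m = single a b * y.m := congrArg Aff.m h
  have hc : single a b * x.c + c = single a b * y.c + c := congrArg Aff.c h
  exact Aff.ext (mul_cancel_single hb hm) (mul_cancel_single hb (by linear_combination hc))


/-! ### the master decoding lemma -/

def p02 (κ : Fin 4 → Fin 4) (i : Fin 4) : Bool := κ i == 0 || κ i == 2
def p12 (κ : Fin 4 → Fin 4) (i : Fin 4) : Bool := κ i == 1 || κ i == 2

lemma p02_true {κ i} : p02 κ i = true ↔ (κ i = 0 ∨ κ i = 2) := by simp [p02]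
lemma p12_true {κ i} : p12 κ i = true ↔ (κ i = 1 ∨ κ i = 2) := by simp [p12]

lemma σ_def : σ = single 1 1 := rfl
lemma e2_def : e2 = single 0 2 := rfl

/-- contradiction lemmas -/
lemma no_A_eq_diag {x : Aff} (hx : Inv x) (j : ℕ) :
    (⟨σ, 0⟩ : Aff) * x ≠ ⟨single 0 ((2:ℚ)^j), 0⟩ := by
  intro h
  obtain ⟨p, q, hm⟩ := hx.mm
  have hmm : σ * x.m = single 0 ((2:ℚ)^j) := congrArg Aff.m h
  rw [hm, σ_mul_m] at hmm
  rcases (R_single_eq_single_iff _ _ _ _).1 hmm with ⟨h1, _⟩ | ⟨h1, _⟩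
  · omega
  · exact pow_ne_zero _ (by norm_num) h1

lemma one_aff_diag : (1 : Aff) = ⟨single 0 ((2:ℚ)^0), 0⟩ := by
  refine Aff.ext ?_ ?_
  · rw [Aff.one_m, pow_zero, ← one_R]
  · rw [Aff.one_c]

lemma no_A_eq_one {x : Aff} (hx : Inv x) : (⟨σ, 0⟩ : Aff) * x ≠ 1 := by
  rw [one_aff_diag]; exact no_A_eq_diag hx 0

lemma no_B_eq_one {x : Aff} (hx : Inv x) : (⟨e2, 0⟩ : Aff) * x ≠ 1 := by
  intro h
  obtain ⟨p, q, hm⟩ := hx.mm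
  have hmm : e2 * x.m = 1 := congrArg Aff.m h
  rw [hm, e2_mul_m, one_R] at hmm
  rcases (R_single_eq_single_iff _ _ _ _).1 hmm with ⟨_, h2⟩ | ⟨h1, _⟩
  · have hp : (1:ℚ) ≤ 2^p := one_le_pow₀ (by norm_num)
    rw [pow_succ] at h2
    nlinarith
  · exact pow_ne_zero _ (by norm_num) h1

lemma no_U_eq_one {x : Aff} (hx : Inv x) : (⟨e2, e2⟩ : Aff) * x ≠ 1 := by
  intro h
  obtain ⟨k, hk⟩ := hx.cc 0
  have hc : e2 * x.c + e2 = 0 := congrArg Aff.c h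
  have h0 : (e2 * x.c + e2) 0 = (0 : R) 0 := by rw [hc]
  rw [R_add_apply, e2_mul_apply, hk, e2_apply_zero, R_zero_apply] at h0
  nlinarith

lemma no_A_eq_U {x y : Aff} (hx : Inv x) (hy : Inv y) :
    (⟨σ, 0⟩ : Aff) * x ≠ (⟨e2, e2⟩ : Aff) * y := by
  intro h
  obtain ⟨k, hk⟩ := hy.cc 0
  have hc : σ * x.c + 0 = e2 * y.c + e2 := congrArg Aff.c h
  have h0 : (σ * x.c + 0) 0 = (e2 * y.c + e2) 0 := by rw [hc]
  rw [R_add_apply, R_add_apply, σ_mul_apply, e2_mul_apply, hk, e2_apply_zero,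
    R_zero_apply, add_zero, hx.neg (0-1) (by omega)] at h0
  nlinarith

lemma no_B_eq_U {x y : Aff} (hx : Inv x) (hy : Inv y) :
    (⟨e2, 0⟩ : Aff) * x ≠ (⟨e2, e2⟩ : Aff) * y := by
  intro h
  obtain ⟨k, hk⟩ := hx.cc 0
  obtain ⟨k', hk'⟩ := hy.cc 0
  have hc : e2 * x.c + 0 = e2 * y.c + e2 := congrArg Aff.c h
  have h0 : (e2 * x.c + 0) 0 = (e2 * y.c + e2) 0 := by rw [hc]
  rw [R_add_apply, R_add_apply, e2_mul_apply, e2_mul_apply, hk, hk',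
    e2_apply_zero, R_zero_apply, add_zero] at h0
  have h4 : ((4*k : ℕ) : ℚ) = ((4*k'+2 : ℕ) : ℚ) := by push_cast; linarith
  have := Nat.cast_inj.mp h4
  omega

/-- commuting a diagonal element past `⟨σ,0⟩` -/
lemma diag_sigma_comm (u : R) (x : Aff) :
    (⟨u, 0⟩ : Aff) * ((⟨σ, 0⟩ : Aff) * x) = (⟨σ, 0⟩ : Aff) * ((⟨u, 0⟩ : Aff) * x) := by
  refine Aff.ext ?_ ?_ <;> simp <;> ring

/-- cancellation by any significant generator -/
lemma pat_cancel {g κ} (P : PatOK g κ) {i : Fin 4} (h3 : κ i ≠ 3) {x y : Aff}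
    (h : g i * x = g i * y) : x = y := by
  rcases fin4_cases (κ i) with hh | hh | hh | hh
  · rw [P.hA i hh, σ_def] at h; exact aff_cancel one_ne_zero h
  · rw [P.hB i hh, e2_def] at h; exact aff_cancel two_ne_zero h
  · rw [P.hU i hh, e2_def] at h; exact aff_cancel two_ne_zero h
  · exact absurd hh h3

lemma σ_cancel {x y : Aff} (h : (⟨σ, 0⟩ : Aff) * x = (⟨σ, 0⟩ : Aff) * y) : x = y := by
  rw [σ_def] at h; exact aff_cancel one_ne_zero h

/-- decomposition at the first `A`-letter -/
lemma first_A_decomp {κ : Fin 4 → Fin 4} :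
    ∀ (l : List (Fin 4)), (∃ a ∈ l, κ a = 0) →
      ∃ w a t, l = w ++ a :: t ∧ κ a = 0 ∧ ∀ b ∈ w, κ b ≠ 0 := by
  intro l
  induction l with
  | nil => rintro ⟨a, ha, -⟩; exact absurd ha List.not_mem_nil
  | cons b bt ih =>
    intro hex
    by_cases hb : κ b = 0
    · exact ⟨[], b, bt, rfl, hb, by simp⟩
    · obtain ⟨a, ha, hka⟩ := hex
      rcases List.mem_cons.1 ha with h | h
      · exact absurd (h ▸ hka) hb
      · obtain ⟨w, a', t, h1, h2, h3⟩ := ih ⟨a, h, hka⟩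
        refine ⟨b :: w, a', t, by rw [List.cons_append, h1], h2, ?_⟩
        intro c hc
        rcases List.mem_cons.1 hc with h | h
        · exact h ▸ hb
        · exact h3 c h

abbrev Concl (κ : Fin 4 → Fin 4) (l l' : List (Fin 4)) : Prop :=
  l.filter (p02 κ) = l'.filter (p02 κ) ∧ l.filter (p12 κ) = l'.filter (p12 κ)

lemma Concl.symm {κ l l'} (h : Concl κ l l') : Concl κ l' l := ⟨h.1.symm, h.2.symm⟩

/-- the `(A, B)` head case -/
lemma caseAB {g κ} (P : PatOK g κ) (n : ℕ)
    (IH : ∀ l l', l.length + l'.length ≤ n → Φ g l = Φ g l' → Concl κ l l')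
    {i : Fin 4} {r : List (Fin 4)} {i' : Fin 4} {r' : List (Fin 4)}
    (hi : κ i = 0) (hi' : κ i' = 1)
    (hlen : (i :: r).length + (i' :: r').length ≤ n + 1)
    (heq : Φ g (i :: r) = Φ g (i' :: r')) :
    Concl κ (i :: r) (i' :: r') := by
  have hc0 : (Φ g (i :: r)).c 0 = 0 := by
    rw [Φ_cons, P.hA i hi, Aff.mul_c, R_add_apply, σ_mul_apply,
      (inv_Φ P r).neg (0-1) (by omega), R_zero_apply, add_zero]
  have hc0' : (Φ g (i' :: r')).c 0 = 0 := by rw [← heq]; exact hc0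
  by_cases hex : ∃ a ∈ i' :: r', κ a = 0
  · obtain ⟨w, a', tail, hdec, hka', hwmem⟩ := first_A_decomp _ hex
    -- no U-letter in w
    have hwnoU : ∀ b ∈ w, κ b ≠ 2 := by
      intro b hb hb2
      obtain ⟨w₁, w₂, hw12⟩ := List.append_of_mem hb
      have hdec2 : i' :: r' = w₁ ++ b :: (w₂ ++ a' :: tail) := by
        rw [hdec, hw12]; simp
      refine c0_ne_zero P w₁ b (w₂ ++ a' :: tail) hb2
        (fun b' hb' => hwmem b' (by rw [hw12]; exact List.mem_append.2 (Or.inl hb'))) ?_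
      rw [← hdec2]
      exact hc0'
    have hwBI : ∀ b ∈ w, κ b = 1 ∨ κ b = 3 := by
      intro b hb
      rcases fin4_cases (κ b) with h | h | h | h
      · exact absurd h (hwmem b hb)
      · exact Or.inl h
      · exact absurd h (hwnoU b hb)
      · exact Or.inr h
    obtain ⟨j, hj⟩ := prod_BI P w hwBI
    have hia : i = a' := P.inj i a' (by rw [hi]; decide) (by rw [hi, hka'])
    -- main equation
    have key : (⟨σ, 0⟩ : Aff) * Φ g r =
        (⟨σ, 0⟩ : Aff) * ((⟨single 0 ((2:ℚ)^j), 0⟩ : Aff) * Φ g tail) := by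
      rw [← diag_sigma_comm]
      calc (⟨σ, 0⟩ : Aff) * Φ g r = Φ g (i :: r) := by rw [Φ_cons, P.hA i hi]
        _ = Φ g (i' :: r') := heq
        _ = Φ g w * (g a' * Φ g tail) := by rw [hdec, Φ_append, Φ_cons]
        _ = (⟨single 0 ((2:ℚ)^j), 0⟩ : Aff) * ((⟨σ, 0⟩ : Aff) * Φ g tail) := by
            rw [hj, P.hA a' hka']
    have heq2 : Φ g r = Φ g (w ++ tail) := by
      rw [Φ_append, hj]
      exact σ_cancel key
    have hlen2 : r.length + (w ++ tail).length ≤ n := by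
      have : (i' :: r').length = w.length + tail.length + 1 := by
        rw [hdec]; simp only [List.length_append, List.length_cons]; omega
      simp only [List.length_cons, List.length_append] at hlen this ⊢
      omega
    obtain ⟨h02, h12⟩ := IH r (w ++ tail) hlen2 heq2
    have hw02 : w.filter (p02 κ) = [] := by
      rw [List.filter_eq_nil_iff]
      intro b hb
      rw [p02_true]
      rintro (h | h)
      · exact hwmem b hb h
      · exact hwnoU b hb h
    rw [List.filter_append, hw02, List.nil_append] at h02
    constructor
    · rw [List.filter_cons_of_pos (p02_true.2 (Or.inl hi)), hdec, List.filter_append,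
        hw02, List.nil_append, List.filter_cons_of_pos (p02_true.2 (Or.inl hka')), h02, hia]
    · rw [List.filter_cons_of_neg (by simp [p12, hi]), hdec, List.filter_append,
        List.filter_cons_of_neg (by simp [p12, hka']), h12, List.filter_append]
  · -- no A-letter at all : contradiction
    push_neg at hex
    have hnoU : ∀ b ∈ i' :: r', κ b ≠ 2 := by
      intro b hb hb2
      obtain ⟨w₁, w₂, hw12⟩ := List.append_of_mem hb
      refine c0_ne_zero P w₁ b w₂ hb2
        (fun b' hb' => hex b' (by rw [hw12]; simp [hb'])) ?_
      rw [← hw12]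
      exact hc0'
    have hBI : ∀ b ∈ i' :: r', κ b = 1 ∨ κ b = 3 := by
      intro b hb
      rcases fin4_cases (κ b) with h | h | h | h
      · exact absurd h (hex b hb)
      · exact Or.inl h
      · exact absurd h (hnoU b hb)
      · exact Or.inr h
    obtain ⟨j, hj⟩ := prod_BI P _ hBI
    rw [Φ_cons, P.hA i hi, hj] at heq
    exact absurd heq (no_A_eq_diag (inv_Φ P r) j)

/-- heads with equal significant pattern -/
lemma caseSame {g κ} (P : PatOK g κ) (n : ℕ)
    (IH : ∀ l l', l.length + l'.length ≤ n → Φ g l = Φ g l' → Concl κ l l')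
    {i : Fin 4} {r : List (Fin 4)} {i' : Fin 4} {r' : List (Fin 4)}
    (h3 : κ i ≠ 3) (hk : κ i = κ i')
    (hlen : (i :: r).length + (i' :: r').length ≤ n + 1)
    (heq : Φ g (i :: r) = Φ g (i' :: r')) :
    Concl κ (i :: r) (i' :: r') := by
  have hii : i = i' := P.inj i i' h3 hk
  subst hii
  rw [Φ_cons, Φ_cons] at heq
  obtain ⟨h02, h12⟩ := IH r r' (by simp only [List.length_cons] at hlen ⊢; omega)
    (pat_cancel P h3 heq)
  constructor
  · by_cases hp : p02 κ i = true
    · rw [List.filter_cons_of_pos hp, List.filter_cons_of_pos hp, h02]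
    · rw [List.filter_cons_of_neg hp, List.filter_cons_of_neg hp, h02]
  · by_cases hp : p12 κ i = true
    · rw [List.filter_cons_of_pos hp, List.filter_cons_of_pos hp, h12]
    · rw [List.filter_cons_of_neg hp, List.filter_cons_of_neg hp, h12]

/-- insignificant head on the left -/
lemma caseIleft {g κ} (P : PatOK g κ) (n : ℕ)
    (IH : ∀ l l', l.length + l'.length ≤ n → Φ g l = Φ g l' → Concl κ l l')
    {i : Fin 4} {r : List (Fin 4)} {l' : List (Fin 4)}
    (hi : κ i = 3)
    (hlen : (i :: r).length + l'.length ≤ n + 1)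
    (heq : Φ g (i :: r) = Φ g l') :
    Concl κ (i :: r) l' := by
  rw [Φ_cons, P.hI i hi, one_mul] at heq
  obtain ⟨h02, h12⟩ := IH r l' (by simp only [List.length_cons] at hlen ⊢; omega) heq
  exact ⟨by rw [List.filter_cons_of_neg (by simp [p02, hi]), h02],
    by rw [List.filter_cons_of_neg (by simp [p12, hi]), h12]⟩

/-- The master decoding theorem. -/
theorem master {g κ} (P : PatOK g κ) :
    ∀ n (l l' : List (Fin 4)), l.length + l'.length ≤ n → Φ g l = Φ g l' →
      Concl κ l l' := by
  intro n
  induction n with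
  | zero =>
    intro l l' hlen _
    have h1 : l = [] := List.length_eq_zero_iff.1 (by omega)
    have h2 : l' = [] := List.length_eq_zero_iff.1 (by omega)
    subst h1; subst h2
    exact ⟨rfl, rfl⟩
  | succ n IH =>
    intro l l' hlen heq
    cases l with
    | nil =>
      cases l' with
      | nil => exact ⟨rfl, rfl⟩
      | cons i' r' =>
        rcases fin4_cases (κ i') with h | h | h | h
        · rw [Φ_nil, Φ_cons, P.hA i' h] at heq
          exact absurd heq.symm (no_A_eq_one (inv_Φ P r'))
        · rw [Φ_nil, Φ_cons, P.hB i' h] at heq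
          exact absurd heq.symm (no_B_eq_one (inv_Φ P r'))
        · rw [Φ_nil, Φ_cons, P.hU i' h] at heq
          exact absurd heq.symm (no_U_eq_one (inv_Φ P r'))
        · exact (caseIleft P n IH h (by simp at hlen ⊢; omega) heq.symm).symm
    | cons i r =>
      cases l' with
      | nil =>
        rcases fin4_cases (κ i) with hi | hi | hi | hi
        · rw [Φ_cons, P.hA i hi, Φ_nil] at heq
          exact absurd heq (no_A_eq_one (inv_Φ P r))
        · rw [Φ_cons, P.hB i hi, Φ_nil] at heq
          exact absurd heq (no_B_eq_one (inv_Φ P r))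
        · rw [Φ_cons, P.hU i hi, Φ_nil] at heq
          exact absurd heq (no_U_eq_one (inv_Φ P r))
        · exact caseIleft P n IH hi hlen heq
      | cons i' r' =>
        have hlen' : (i' :: r').length + (i :: r).length ≤ n + 1 := by
          simp at hlen ⊢; omega
        rcases fin4_cases (κ i) with hi | hi | hi | hi
        · rcases fin4_cases (κ i') with hi' | hi' | hi' | hi'
          · exact caseSame P n IH (by rw [hi]; decide) (by rw [hi, hi']) hlen heq
          · exact caseAB P n IH hi hi' hlen heq
          · rw [Φ_cons, Φ_cons, P.hA i hi, P.hU i' hi'] at heq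
            exact absurd heq (no_A_eq_U (inv_Φ P r) (inv_Φ P r'))
          · exact (caseIleft P n IH hi' hlen' heq.symm).symm
        · rcases fin4_cases (κ i') with hi' | hi' | hi' | hi'
          · exact (caseAB P n IH hi' hi hlen' heq.symm).symm
          · exact caseSame P n IH (by rw [hi]; decide) (by rw [hi, hi']) hlen heq
          · rw [Φ_cons, Φ_cons, P.hB i hi, P.hU i' hi'] at heq
            exact absurd heq (no_B_eq_U (inv_Φ P r) (inv_Φ P r'))
          · exact (caseIleft P n IH hi' hlen' heq.symm).symm
        · rcases fin4_cases (κ i') with hi' | hi' | hi' | hi'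
          · rw [Φ_cons, Φ_cons, P.hU i hi, P.hA i' hi'] at heq
            exact absurd heq.symm (no_A_eq_U (inv_Φ P r') (inv_Φ P r))
          · rw [Φ_cons, Φ_cons, P.hU i hi, P.hB i' hi'] at heq
            exact absurd heq.symm (no_B_eq_U (inv_Φ P r') (inv_Φ P r))
          · exact caseSame P n IH (by rw [hi]; decide) (by rw [hi, hi']) hlen heq
          · exact (caseIleft P n IH hi' hlen' heq.symm).symm
        · exact caseIleft P n IH hi hlen heq


/-! ### trace monoid combinatorics -/

def TEq (l l' : List (Fin 4)) : Prop :=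
  (conGen tracePathRel) (FreeMonoid.ofList l) (FreeMonoid.ofList l')

lemma teq_refl (l) : TEq l l := (conGen tracePathRel).refl _
lemma teq_symm {l l'} (h : TEq l l') : TEq l' l := (conGen tracePathRel).symm h
lemma teq_trans {l l' l''} (h : TEq l l') (h' : TEq l' l'') : TEq l l'' :=
  (conGen tracePathRel).trans h h'

def adjB (a b : Fin 4) : Bool := (a.val + 1 == b.val) || (b.val + 1 == a.val)

lemma teq_base {a b : Fin 4} (h : a.val + 1 = b.val) : TEq [a, b] [b, a] := by
  have h3 : a.val < 3 := by omega
  have ha : (⟨a.val, h3⟩ : Fin 3).castSucc = a := by ext; simp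
  have hb : (⟨a.val, h3⟩ : Fin 3).succ = b := by ext; simp; omega
  have : tracePathRel (FreeMonoid.ofList [a, b]) (FreeMonoid.ofList [b, a]) := by
    refine ⟨⟨a.val, h3⟩, ?_, ?_⟩ <;> rw [ha, hb] <;> rfl
  exact ConGen.Rel.of _ _ this

lemma teq_swap_pair {a b : Fin 4} (h : adjB a b = true) : TEq [a, b] [b, a] := by
  rcases (by simpa [adjB] using h : (a:Fin 4).val + 1 = b.val ∨ b.val + 1 = a.val) with h' | h'
  · exact teq_base h'
  · exact teq_symm (teq_base h')

lemma ofList_split (u v : List (Fin 4)) (a b : Fin 4) :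
    FreeMonoid.ofList (u ++ a :: b :: v) =
      FreeMonoid.ofList u * (FreeMonoid.ofList [a, b] * FreeMonoid.ofList v) := by
  rw [← FreeMonoid.ofList_append, ← FreeMonoid.ofList_append]
  rfl

lemma teq_swap {a b : Fin 4} (h : adjB a b = true) (u v : List (Fin 4)) :
    TEq (u ++ a :: b :: v) (u ++ b :: a :: v) := by
  unfold TEq
  rw [ofList_split, ofList_split]
  exact (conGen tracePathRel).mul ((conGen tracePathRel).refl _)
    ((conGen tracePathRel).mul (teq_swap_pair h) ((conGen tracePathRel).refl _))

lemma teq_cons {a : Fin 4} {l l'} (h : TEq l l') : TEq (a :: l) (a :: l') := by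
  unfold TEq
  have : ∀ m : List (Fin 4), FreeMonoid.ofList (a :: m) =
      FreeMonoid.ofList [a] * FreeMonoid.ofList m := fun m => rfl
  rw [this, this]
  exact (conGen tracePathRel).mul ((conGen tracePathRel).refl _) h

lemma teq_pull {a : Fin 4} :
    ∀ (p : List (Fin 4)) (s : List (Fin 4)), (∀ b ∈ p, adjB b a = true) →
      TEq (p ++ a :: s) (a :: (p ++ s)) := by
  intro p
  induction p with
  | nil => intro s _; exact teq_refl _
  | cons b p' ih =>
    intro s hp
    have h1 : TEq (p' ++ a :: s) (a :: (p' ++ s)) := ih s (fun c hc => hp c (by simp [hc]))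
    have h2 : TEq (b :: (p' ++ a :: s)) (b :: a :: (p' ++ s)) := teq_cons h1
    have h3 : TEq ([] ++ b :: a :: (p' ++ s)) ([] ++ a :: b :: (p' ++ s)) :=
      teq_swap (hp b (by simp)) [] (p' ++ s)
    simpa using teq_trans h2 h3

/-- the three dependent-pair predicates: `{u1,u3}`, `{u1,u4}`, `{u2,u4}` -/
def q02 (i : Fin 4) : Bool := i == 0 || i == 2
def q03 (i : Fin 4) : Bool := i == 0 || i == 3
def q13 (i : Fin 4) : Bool := i == 1 || i == 3

/-- decomposition at the first letter satisfying a predicate -/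
lemma first_decomp {p : Fin 4 → Bool} :
    ∀ (l : List (Fin 4)), (∃ x ∈ l, p x = true) →
      ∃ w x t, l = w ++ x :: t ∧ p x = true ∧ ∀ b ∈ w, p b = false := by
  intro l
  induction l with
  | nil => rintro ⟨x, hx, -⟩; exact absurd hx List.not_mem_nil
  | cons b bt ih =>
    intro hex
    by_cases hb : p b = true
    · exact ⟨[], b, bt, rfl, hb, by simp⟩
    · obtain ⟨x, hx, hpx⟩ := hex
      rcases List.mem_cons.1 hx with h | h
      · exact absurd (h ▸ hpx) hb
      · obtain ⟨w, x', t, h1, h2, h3⟩ := ih ⟨x, h, hpx⟩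
        refine ⟨b :: w, x', t, by rw [List.cons_append, h1], h2, ?_⟩
        intro c hc
        rcases List.mem_cons.1 hc with h | h
        · subst h; simpa using hb
        · exact h3 c h

lemma pair_pred_of_dep {a x : Fin 4} (hne : x ≠ a) (hdep : adjB x a = false) :
    ∃ P, (P = q02 ∨ P = q03 ∨ P = q13) ∧ P a = true ∧ P x = true := by
  fin_cases a <;> fin_cases x <;>
    first
      | exact absurd rfl hne
      | exact absurd hdep (by decide)
      | exact ⟨q02, Or.inl rfl, by decide, by decide⟩
      | exact ⟨q03, Or.inr (Or.inl rfl), by decide, by decide⟩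
      | exact ⟨q13, Or.inr (Or.inr rfl), by decide, by decide⟩

lemma pair_nonadj {P : Fin 4 → Bool} {a b : Fin 4}
    (hP : P = q02 ∨ P = q03 ∨ P = q13) (hPa : P a = true) (hPb : P b = true)
    (hne : b ≠ a) : adjB b a = false := by
  rcases hP with h | h | h <;> subst h <;> fin_cases a <;> fin_cases b <;>
    first
      | exact absurd rfl hne
      | exact absurd hPa (by decide)
      | exact absurd hPb (by decide)
      | decide

lemma D_false {a b : Fin 4} (h : (b == a || !adjB b a) = false) :
    b ≠ a ∧ adjB b a = true := by
  rcases Bool.or_eq_false_iff.1 h with ⟨h1, h2⟩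
  exact ⟨by simpa using h1, by simpa using h2⟩

lemma D_true_ne {a x : Fin 4} (h : (x == a || !adjB x a) = true) (hne : x ≠ a) :
    adjB x a = false := by
  rcases (by simpa using h : x = a ∨ adjB x a = false) with h' | h'
  · exact absurd h' hne
  · exact h'

/-- the projection lemma for our trace monoid -/
theorem proj_lemma :
    ∀ n (l l' : List (Fin 4)), l.length ≤ n →
      l.filter q02 = l'.filter q02 → l.filter q03 = l'.filter q03 →
      l.filter q13 = l'.filter q13 → TEq l l' := by
  intro n
  induction n with
  | zero =>
    intro l l' hlen h02 h03 h13
    have h1 : l = [] := List.length_eq_zero_iff.1 (by omega)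
    subst h1
    cases l' with
    | nil => exact teq_refl _
    | cons i' r' =>
      exfalso
      have hcov : q02 i' = true ∨ q03 i' = true ∨ q13 i' = true := by
        fin_cases i' <;> simp [q02, q03, q13]
      rcases hcov with h | h | h
      · have := h02.symm; rw [List.filter_cons_of_pos h] at this; simp at this
      · have := h03.symm; rw [List.filter_cons_of_pos h] at this; simp at this
      · have := h13.symm; rw [List.filter_cons_of_pos h] at this; simp at this
  | succ n IH =>
    intro l l' hlen h02 h03 h13
    cases l with
    | nil =>
      cases l' with
      | nil => exact teq_refl _
      | cons i' r' =>
        exfalso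
        have hcov : q02 i' = true ∨ q03 i' = true ∨ q13 i' = true := by
          fin_cases i' <;> simp [q02, q03, q13]
        rcases hcov with h | h | h
        · have := h02.symm; rw [List.filter_cons_of_pos h] at this; simp at this
        · have := h03.symm; rw [List.filter_cons_of_pos h] at this; simp at this
        · have := h13.symm; rw [List.filter_cons_of_pos h] at this; simp at this
    | cons a r =>
      -- a is in l'
      have hmem : a ∈ l' := by
        have hcov : q02 a = true ∨ q03 a = true ∨ q13 a = true := by
          fin_cases a <;> simp [q02, q03, q13]
        rcases hcov with h | h | h
        · have h' := h02; rw [List.filter_cons_of_pos h] at h'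
          exact List.mem_of_mem_filter (h' ▸ List.mem_cons_self (a := a) (l := _))
        · have h' := h03; rw [List.filter_cons_of_pos h] at h'
          exact List.mem_of_mem_filter (h' ▸ List.mem_cons_self (a := a) (l := _))
        · have h' := h13; rw [List.filter_cons_of_pos h] at h'
          exact List.mem_of_mem_filter (h' ▸ List.mem_cons_self (a := a) (l := _))
      obtain ⟨w, x, t, hdec, hx, hw⟩ :=
        first_decomp (p := fun b => b == a || !adjB b a) l' ⟨a, hmem, by simp⟩
      -- x = a
      have hxa : a = x := by
        rw [eq_comm]
        by_contra hne
        have hdep : adjB x a = false := D_true_ne hx hne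
        obtain ⟨P, hPmem, hPa, hPx⟩ := pair_pred_of_dep hne hdep
        have hwP : w.filter P = [] := by
          rw [List.filter_eq_nil_iff]
          intro b hb hPb
          obtain ⟨hne', hadj⟩ := D_false (hw b hb)
          have hfalse := pair_nonadj hPmem hPa hPb hne'
          rw [hfalse] at hadj
          exact Bool.false_ne_true hadj
        have hfl' : l'.filter P = x :: t.filter P := by
          rw [hdec, List.filter_append, hwP, List.nil_append, List.filter_cons_of_pos hPx]
        have hfl : (a :: r).filter P = a :: r.filter P := List.filter_cons_of_pos hPa
        have hPeq : (a :: r).filter P = l'.filter P := by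
          rcases hPmem with h | h | h <;> subst h <;> assumption
        rw [hfl, hfl'] at hPeq
        exact hne (by injection hPeq with h1 _; exact h1.symm)
      subst hxa
      -- prefix letters are adjacent to a
      have hwadj : ∀ b ∈ w, adjB b a = true := fun b hb => (D_false (hw b hb)).2
      have hwne : ∀ b ∈ w, b ≠ a := fun b hb => (D_false (hw b hb)).1
      -- filters of the tails agree
      have hfilters : ∀ P : Fin 4 → Bool, (P = q02 ∨ P = q03 ∨ P = q13) →
          (a :: r).filter P = l'.filter P → r.filter P = (w ++ t).filter P := by
        intro P hPmem hPeq
        by_cases hPa : P a = true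
        · have hwP : w.filter P = [] := by
            rw [List.filter_eq_nil_iff]
            intro b hb hPb
            have hfalse := pair_nonadj hPmem hPa hPb (hwne b hb)
            have hadj := hwadj b hb
            rw [hfalse] at hadj
            exact Bool.false_ne_true hadj
          have h1 : (a :: r).filter P = a :: r.filter P := List.filter_cons_of_pos hPa
          have h2 : l'.filter P = a :: t.filter P := by
            rw [hdec, List.filter_append, hwP, List.nil_append, List.filter_cons_of_pos hPa]
          rw [h1, h2] at hPeq
          rw [List.filter_append, hwP, List.nil_append]
          injection hPeq
        · have h1 : (a :: r).filter P = r.filter P := List.filter_cons_of_neg hPa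
          have h2 : l'.filter P = (w ++ t).filter P := by
            rw [hdec, List.filter_append, List.filter_append,
              List.filter_cons_of_neg hPa]
          rw [← h1, ← h2, hPeq]
      have hr02 := hfilters q02 (Or.inl rfl) h02
      have hr03 := hfilters q03 (Or.inr (Or.inl rfl)) h03
      have hr13 := hfilters q13 (Or.inr (Or.inr rfl)) h13
      have hIH : TEq r (w ++ t) := IH r (w ++ t)
        (by simp only [List.length_cons] at hlen; omega) hr02 hr03 hr13
      have step1 : TEq (a :: r) (a :: (w ++ t)) := teq_cons hIH
      have step2 : TEq (w ++ a :: t) (a :: (w ++ t)) := teq_pull w t hwadj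
      rw [hdec]
      exact teq_trans step1 (teq_symm step2)


/-! ### homomorphisms -/

lemma hrel_mk {r : FreeGroup (Fin 4)} (h : r ∈ hRels) :
    PresentedGroup.mk hRels r = 1 :=
  (QuotientGroup.eq_one_iff r).2 (Subgroup.subset_normalClosure h)

lemma mem1 : (FreeGroup.of 3 * FreeGroup.of 0 * (FreeGroup.of 0 * FreeGroup.of 3)⁻¹) ∈ hRels := by
  simp [hRels]
lemma mem2 : (FreeGroup.of 0 * FreeGroup.of 2 * (FreeGroup.of 2 * FreeGroup.of 0)⁻¹) ∈ hRels := by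
  simp [hRels]
lemma mem3 : (FreeGroup.of 2 * FreeGroup.of 1 * (FreeGroup.of 1 * FreeGroup.of 2)⁻¹) ∈ hRels := by
  simp [hRels]
lemma mem4 : ((FreeGroup.of 1) ^ 2 * FreeGroup.of 0 * (FreeGroup.of 0 * FreeGroup.of 1)⁻¹) ∈ hRels := by
  simp [hRels]

lemma comm_tx : Hgrp.t * Hgrp.x = Hgrp.x * Hgrp.t := by
  have h := hrel_mk mem1
  rw [map_mul, map_mul, map_inv, map_mul, mul_inv_eq_one] at h
  exact h

lemma comm_xz : Hgrp.x * Hgrp.z = Hgrp.z * Hgrp.x := by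
  have h := hrel_mk mem2
  rw [map_mul, map_mul, map_inv, map_mul, mul_inv_eq_one] at h
  exact h

lemma comm_zy : Hgrp.z * Hgrp.y = Hgrp.y * Hgrp.z := by
  have h := hrel_mk mem3
  rw [map_mul, map_mul, map_inv, map_mul, mul_inv_eq_one] at h
  exact h

lemma rel_y : Hgrp.y * Hgrp.y * Hgrp.x = Hgrp.x * Hgrp.y := by
  have h := hrel_mk mem4
  rw [map_mul, map_mul, map_inv, map_mul, map_pow, mul_inv_eq_one, pow_two] at h
  exact h

/-- generators of the submonoid, in trace-letter order `u1 = t, u2 = x, u3 = z, u4 = xy` -/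
def gens : Fin 4 → Hgrp := ![Hgrp.t, Hgrp.x, Hgrp.z, Hgrp.x * Hgrp.y]

lemma comm_z_xy : Hgrp.z * (Hgrp.x * Hgrp.y) = (Hgrp.x * Hgrp.y) * Hgrp.z := by
  calc Hgrp.z * (Hgrp.x * Hgrp.y) = (Hgrp.z * Hgrp.x) * Hgrp.y := by rw [mul_assoc]
    _ = (Hgrp.x * Hgrp.z) * Hgrp.y := by rw [comm_xz]
    _ = Hgrp.x * (Hgrp.z * Hgrp.y) := by rw [mul_assoc]
    _ = Hgrp.x * (Hgrp.y * Hgrp.z) := by rw [comm_zy]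
    _ = (Hgrp.x * Hgrp.y) * Hgrp.z := by rw [mul_assoc]

lemma gens_cond : ∀ a b : FreeMonoid (Fin 4), tracePathRel a b →
    FreeMonoid.lift gens a = FreeMonoid.lift gens b := by
  rintro a b ⟨i, rfl, rfl⟩
  rw [map_mul, map_mul]
  fin_cases i
  · simpa [gens] using comm_tx
  · simpa [gens] using comm_xz
  · simpa [gens] using comm_z_xy

/-- the monoid homomorphism `φ : T(P₄) →* H` -/
def φH : TP4 →* Hgrp := PresentedMonoid.lift gens gens_cond

lemma φH_mk (l : FreeMonoid (Fin 4)) :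
    φH (PresentedMonoid.mk tracePathRel l) = FreeMonoid.lift gens l := rfl

/-- the two affine representations -/
def f1 : Fin 4 → Affˣ := ![pB, pY, 1, pA]
def f2 : Fin 4 → Affˣ := ![1, 1, pU, pA]

lemma one_add_one_R : (1 : R) + 1 = e2 := by
  rw [one_R, e2_def, ← AddMonoidAlgebra.single_add]
  norm_num

lemma cond1 : ∀ r ∈ hRels, FreeGroup.lift f1 r = 1 := by
  intro r hr
  rcases hr with h | h | h | h
  · subst h
    rw [map_mul, map_mul, map_inv, map_mul, mul_inv_eq_one]
    simp only [FreeGroup.lift_apply_of, f1]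
    refine Units.ext (Aff.ext ?_ ?_) <;>
      simp [Units.val_mul, mul_comm]
  · subst h
    rw [map_mul, map_mul, map_inv, map_mul, mul_inv_eq_one]
    simp only [FreeGroup.lift_apply_of, f1]
    refine Units.ext (Aff.ext ?_ ?_) <;>
      simp [Units.val_mul, mul_comm]
  · subst h
    rw [map_mul, map_mul, map_inv, map_mul, mul_inv_eq_one]
    simp only [FreeGroup.lift_apply_of, f1]
    refine Units.ext (Aff.ext ?_ ?_) <;>
      simp [Units.val_mul, mul_comm]
  · rw [Set.mem_singleton_iff] at h
    subst h
    rw [map_mul, map_mul, map_inv, map_mul, map_pow, mul_inv_eq_one, pow_two]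
    simp only [FreeGroup.lift_apply_of, f1]
    refine Units.ext (Aff.ext ?_ ?_) <;>
      simp [Units.val_mul, one_add_one_R]

lemma cond2 : ∀ r ∈ hRels, FreeGroup.lift f2 r = 1 := by
  intro r hr
  rcases hr with h | h | h | h
  · subst h
    rw [map_mul, map_mul, map_inv, map_mul, mul_inv_eq_one]
    simp [FreeGroup.lift_apply_of, f2]
  · subst h
    rw [map_mul, map_mul, map_inv, map_mul, mul_inv_eq_one]
    simp [FreeGroup.lift_apply_of, f2]
  · subst h
    rw [map_mul, map_mul, map_inv, map_mul, mul_inv_eq_one]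
    simp [FreeGroup.lift_apply_of, f2]
  · rw [Set.mem_singleton_iff] at h
    subst h
    rw [map_mul, map_mul, map_inv, map_mul, map_pow, mul_inv_eq_one, pow_two]
    simp [FreeGroup.lift_apply_of, f2]

def ψ₁ : Hgrp →* Affˣ := PresentedGroup.toGroup cond1
def ψ₂ : Hgrp →* Affˣ := PresentedGroup.toGroup cond2

/-- evaluation of the composites on words -/
lemma eval_word (ψ : Hgrp →* Affˣ) (l : FreeMonoid (Fin 4)) :
    ((ψ (FreeMonoid.lift gens l) : Affˣ) : Aff) =
      Φ (fun i => ((ψ (gens i) : Affˣ) : Aff)) (FreeMonoid.toList l) := by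
  have h1 : (Units.coeHom Aff).comp (ψ.comp (FreeMonoid.lift gens)) =
      FreeMonoid.lift (fun i => ((ψ (gens i) : Affˣ) : Aff)) :=
    FreeMonoid.hom_eq (fun x => by simp)
  have h2 := congrArg (fun F : FreeMonoid (Fin 4) →* Aff => F l) h1
  simp only [MonoidHom.comp_apply, Units.coeHom_apply] at h2
  rw [h2, FreeMonoid.lift_apply]
  rfl

def gA1 : Fin 4 → Aff := fun i => ((ψ₁ (gens i) : Affˣ) : Aff)
def gA2 : Fin 4 → Aff := fun i => ((ψ₂ (gens i) : Affˣ) : Aff)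

def κ₁ : Fin 4 → Fin 4 := ![0, 1, 3, 2]
def κ₂ : Fin 4 → Fin 4 := ![0, 3, 2, 3]

lemma ψ₁_of (i : Fin 4) : ψ₁ (PresentedGroup.of i) = f1 i := PresentedGroup.toGroup.of cond1
lemma ψ₂_of (i : Fin 4) : ψ₂ (PresentedGroup.of i) = f2 i := PresentedGroup.toGroup.of cond2

lemma gA1_vals : gA1 0 = ⟨σ, 0⟩ ∧ gA1 1 = ⟨e2, 0⟩ ∧ gA1 2 = 1 ∧ gA1 3 = ⟨e2, e2⟩ := by
  refine ⟨?_, ?_, ?_, ?_⟩ <;>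
    simp only [gA1, gens, Matrix.cons_val_zero, Matrix.cons_val_one, Matrix.head_cons,
      Matrix.cons_val_two, Matrix.tail_cons, Matrix.cons_val_three, Hgrp.t, Hgrp.x, Hgrp.y,
      Hgrp.z, map_mul, ψ₁_of, f1]
  · rfl
  · rfl
  · rfl
  · rw [pB_mul_pY]; rfl

lemma gA2_vals : gA2 0 = ⟨σ, 0⟩ ∧ gA2 1 = 1 ∧ gA2 2 = ⟨e2, e2⟩ ∧ gA2 3 = 1 := by
  refine ⟨?_, ?_, ?_, ?_⟩ <;>
    simp only [gA2, gens, Matrix.cons_val_zero, Matrix.cons_val_one, Matrix.head_cons,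
      Matrix.cons_val_two, Matrix.tail_cons, Matrix.cons_val_three, Hgrp.t, Hgrp.x, Hgrp.y,
      Hgrp.z, map_mul, ψ₂_of, f2]
  · rfl
  · rfl
  · rfl
  · simp

lemma patOK1 : PatOK gA1 κ₁ := by
  obtain ⟨h0, h1, h2, h3⟩ := gA1_vals
  refine ⟨?_, ?_, ?_, ?_, ?_⟩
  · intro i hi; fin_cases i <;> simp_all [κ₁] <;> exact absurd hi (by decide)
  · intro i hi; fin_cases i <;> simp_all [κ₁] <;> exact absurd hi (by decide)
  · intro i hi; fin_cases i <;> simp_all [κ₁] <;> exact absurd hi (by decide)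
  · intro i hi; fin_cases i <;> simp_all [κ₁] <;> exact absurd hi (by decide)
  · decide

lemma patOK2 : PatOK gA2 κ₂ := by
  obtain ⟨h0, h1, h2, h3⟩ := gA2_vals
  refine ⟨?_, ?_, ?_, ?_, ?_⟩
  · intro i hi; fin_cases i <;> simp_all [κ₂] <;> exact absurd hi (by decide)
  · intro i hi; fin_cases i <;> simp_all [κ₂] <;> exact absurd hi (by decide)
  · intro i hi; fin_cases i <;> simp_all [κ₂] <;> exact absurd hi (by decide)
  · intro i hi; fin_cases i <;> simp_all [κ₂] <;> exact absurd hi (by decide)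
  · decide

lemma pred_eq_1 : p02 κ₁ = q03 := by funext i; fin_cases i <;> rfl
lemma pred_eq_2 : p12 κ₁ = q13 := by funext i; fin_cases i <;> rfl
lemma pred_eq_3 : p02 κ₂ = q02 := by funext i; fin_cases i <;> rfl

theorem φH_injective : Function.Injective φH := by
  intro A B
  refine PresentedMonoid.inductionOn₂ A B ?_
  intro a b h
  rw [φH_mk, φH_mk] at h
  have ev1 : ∀ l : FreeMonoid (Fin 4), ((ψ₁ (FreeMonoid.lift gens l) : Affˣ) : Aff) =
      Φ gA1 (FreeMonoid.toList l) := fun l => eval_word ψ₁ l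
  have ev2 : ∀ l : FreeMonoid (Fin 4), ((ψ₂ (FreeMonoid.lift gens l) : Affˣ) : Aff) =
      Φ gA2 (FreeMonoid.toList l) := fun l => eval_word ψ₂ l
  have e1 : Φ gA1 (FreeMonoid.toList a) = Φ gA1 (FreeMonoid.toList b) := by
    rw [← ev1 a, ← ev1 b, h]
  have e2' : Φ gA2 (FreeMonoid.toList a) = Φ gA2 (FreeMonoid.toList b) := by
    rw [← ev2 a, ← ev2 b, h]
  obtain ⟨h03, h13⟩ := master patOK1 _ _ _ (le_refl _) e1
  obtain ⟨h02, -⟩ := master patOK2 _ _ _ (le_refl _) e2'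
  rw [pred_eq_1] at h03
  rw [pred_eq_2] at h13
  rw [pred_eq_3] at h02
  have hT : TEq (FreeMonoid.toList a) (FreeMonoid.toList b) :=
    proj_lemma (FreeMonoid.toList a).length _ _ (le_refl _) h02 h03 h13
  unfold TEq at hT
  rw [FreeMonoid.ofList_toList, FreeMonoid.ofList_toList] at hT
  exact Quotient.sound hT


/-! ### range of φ and part (ii) -/

lemma φH_of (i : Fin 4) : φH (PresentedMonoid.of tracePathRel i) = gens i := rfl

lemma range_gens : Set.range gens = {Hgrp.t, Hgrp.x, Hgrp.z, Hgrp.x * Hgrp.y} := by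
  ext g
  constructor
  · rintro ⟨i, rfl⟩
    fin_cases i <;> simp [gens]
  · rintro (rfl | rfl | rfl | rfl)
    · exact ⟨0, rfl⟩
    · exact ⟨1, rfl⟩
    · exact ⟨2, rfl⟩
    · exact ⟨3, rfl⟩

lemma mrange_φH : MonoidHom.mrange φH =
    Submonoid.closure {Hgrp.t, Hgrp.x, Hgrp.z, Hgrp.x * Hgrp.y} := by
  rw [MonoidHom.mrange_eq_map, ← PresentedMonoid.closure_range_of tracePathRel,
    MonoidHom.map_mclosure, ← Set.range_comp]
  congr 1
  rw [← range_gens]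
  rfl

lemma closure_top :
    Subgroup.closure {Hgrp.t, Hgrp.x, Hgrp.z, Hgrp.x * Hgrp.y} = ⊤ := by
  rw [eq_top_iff]
  rintro g -
  refine PresentedGroup.generated_by hRels _ ?_ g
  intro j
  have ht : Hgrp.t ∈ Subgroup.closure {Hgrp.t, Hgrp.x, Hgrp.z, Hgrp.x * Hgrp.y} :=
    Subgroup.subset_closure (by simp)
  have hx : Hgrp.x ∈ Subgroup.closure {Hgrp.t, Hgrp.x, Hgrp.z, Hgrp.x * Hgrp.y} :=
    Subgroup.subset_closure (by simp)
  have hz : Hgrp.z ∈ Subgroup.closure {Hgrp.t, Hgrp.x, Hgrp.z, Hgrp.x * Hgrp.y} :=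
    Subgroup.subset_closure (by simp)
  have hxy : Hgrp.x * Hgrp.y ∈ Subgroup.closure {Hgrp.t, Hgrp.x, Hgrp.z, Hgrp.x * Hgrp.y} :=
    Subgroup.subset_closure (by simp)
  have hy : Hgrp.y ∈ Subgroup.closure {Hgrp.t, Hgrp.x, Hgrp.z, Hgrp.x * Hgrp.y} := by
    have h := mul_mem (inv_mem hx) hxy
    rwa [← mul_assoc, inv_mul_cancel, one_mul] at h
  fin_cases j
  · exact hx
  · exact hy
  · exact hz
  · exact ht

abbrev C2 := Multiplicative (ZMod 2)

lemma hom_kills_y (f : Hgrp →* C2) : f Hgrp.y = 1 := by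
  have h := congrArg f rel_y
  rw [map_mul, map_mul, map_mul] at h
  have h2 : f Hgrp.y * f Hgrp.y * f Hgrp.x = f Hgrp.y * f Hgrp.x := by
    rw [h, mul_comm]
  have h3 := mul_right_cancel h2
  exact mul_eq_right.1 h3

lemma condH (a b c : C2) :
    ∀ r ∈ hRels, FreeGroup.lift ![a, 1, b, c] r = 1 := by
  intro r hr
  rcases hr with h | h | h | h
  · subst h
    rw [map_mul, map_mul, map_inv, map_mul, mul_inv_eq_one]
    exact mul_comm _ _
  · subst h
    rw [map_mul, map_mul, map_inv, map_mul, mul_inv_eq_one]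
    exact mul_comm _ _
  · subst h
    rw [map_mul, map_mul, map_inv, map_mul, mul_inv_eq_one]
    exact mul_comm _ _
  · rw [Set.mem_singleton_iff] at h
    subst h
    rw [map_mul, map_mul, map_inv, map_mul, map_pow, mul_inv_eq_one]
    simp [FreeGroup.lift_apply_of]

def equivHomH : (Hgrp →* C2) ≃ (C2 × C2 × C2) where
  toFun f := (f Hgrp.x, f Hgrp.z, f Hgrp.t)
  invFun c := PresentedGroup.toGroup (condH c.1 c.2.1 c.2.2)
  left_inv f := by
    symm
    apply PresentedGroup.ext
    intro i
    rw [PresentedGroup.toGroup.of]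
    fin_cases i
    · rfl
    · exact hom_kills_y f
    · rfl
    · rfl
  right_inv c := by
    refine Prod.ext ?_ (Prod.ext ?_ ?_)
    · exact PresentedGroup.toGroup.of _
    · exact PresentedGroup.toGroup.of _
    · exact PresentedGroup.toGroup.of _

lemma condA (v : Fin 4 → C2) :
    ∀ r ∈ ap4Rels, FreeGroup.lift v r = 1 := by
  rintro r ⟨i, rfl⟩
  rw [map_mul, map_mul, map_inv, map_mul, mul_inv_eq_one]
  exact mul_comm _ _

def equivHomA : (AP4 →* C2) ≃ (Fin 4 → C2) where
  toFun f := fun i => f (PresentedGroup.of i)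
  invFun v := PresentedGroup.toGroup (condA v)
  left_inv f := by
    symm
    apply PresentedGroup.ext
    intro i
    rw [PresentedGroup.toGroup.of]
  right_inv v := by
    funext i
    exact PresentedGroup.toGroup.of _

lemma card_C2 : Nat.card C2 = 2 := by
  rw [Nat.card_eq_fintype_card]
  rfl

lemma card_homH : Nat.card (Hgrp →* C2) = 8 := by
  rw [Nat.card_congr equivHomH, Nat.card_prod, Nat.card_prod, card_C2]

lemma card_homA : Nat.card (AP4 →* C2) = 16 := by
  rw [Nat.card_congr equivHomA, Nat.card_fun, card_C2, Nat.card_eq_fintype_card]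
  rfl

theorem not_iso_AP4 :
    IsEmpty
      (↥(Subgroup.closure {Hgrp.t, Hgrp.x, Hgrp.z, Hgrp.x * Hgrp.y}) ≃* AP4) := by
  constructor
  intro e
  have EH : Hgrp ≃* AP4 :=
    (((MulEquiv.subgroupCongr closure_top).trans Subgroup.topEquiv).symm).trans e
  have eqv : (AP4 →* C2) ≃ (Hgrp →* C2) :=
    { toFun := fun f => f.comp EH.toMonoidHom
      invFun := fun f => f.comp EH.symm.toMonoidHom
      left_inv := fun f => by ext a; simp
      right_inv := fun f => by ext a; simp }
  have : (16 : ℕ) = 8 := by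
    rw [← card_homA, ← card_homH, Nat.card_congr eqv]
  omega

end
end TP4P

/-- In `H = Gp⟨x, y, z, t | tx = xt, xz = zx, zy = yz, y²x = xy⟩`, the submonoid
generated by `X = {t, x, z, xy}` is isomorphic to the trace monoid `T(P_4)` (via an
isomorphism matching `t, x, z, xy` with `u₁, u₂, u₃, u₄` in order), whereas the subgroup
generated by `X` is not isomorphic to the right-angled Artin group `A(P_4)`. -/
theorem hgrp_embeds_TP4_but_subgroup_not_AP4 :
    (∃ φ : TP4 →* Hgrp,
      Function.Injective φ ∧
      φ (PresentedMonoid.of tracePathRel 0) = Hgrp.t ∧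
      φ (PresentedMonoid.of tracePathRel 1) = Hgrp.x ∧
      φ (PresentedMonoid.of tracePathRel 2) = Hgrp.z ∧
      φ (PresentedMonoid.of tracePathRel 3) = Hgrp.x * Hgrp.y ∧
      MonoidHom.mrange φ =
        Submonoid.closure {Hgrp.t, Hgrp.x, Hgrp.z, Hgrp.x * Hgrp.y}) ∧
    IsEmpty
      (↥(Subgroup.closure {Hgrp.t, Hgrp.x, Hgrp.z, Hgrp.x * Hgrp.y}) ≃* AP4) := by
  constructor
  · refine ⟨TP4P.φH, TP4P.φH_injective, ?_, ?_, ?_, ?_, TP4P.mrange_φH⟩ <;>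
      rw [TP4P.φH_of] <;> simp [TP4P.gens]
  · exact TP4P.not_iso_AP4
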